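/- Let X be a path-connected topological space and let α ∈ π₁(X, x₀) be a central element that lies in the image of ev_* : π₁(G, id) → π₁(X, x₀) for some path-connected group G of homeomorphisms of X (with ev(g) = g·x₀). Then α acts trivially on all homotopy groups πₙ(X, x₀). -/

import Mathlib

open CategoryTheory FundamentalGroupoid unitInterval Topology Topology.Homotopy

universe u v

noncomputable section

attribute [local instance] Path.Homotopic.setoid

/-- The homomorphism on fundamental groups induced by a continuous map. -/
def pi1Map {X Y : Type u} [TopologicalSpace X] [TopologicalSpace Y] (f : C(X, Y)) (x : X) :
    FundamentalGroup X x →* FundamentalGroup Y (f x) :=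
  (πₘ (TopCat.ofHom f)).mapEnd ⟨x⟩

/-- A Serre fibration: the homotopy lifting property with respect to all cubes. -/
def IsSerreFibration {E : Type u} {B : Type v} [TopologicalSpace E] [TopologicalSpace B]
    (p : C(E, B)) : Prop :=
  ∀ n : ℕ, ∀ (H : C((Fin n → I) × I, B)) (h₀ : C(Fin n → I, E)),
    (∀ y, p (h₀ y) = H (y, 0)) →
      ∃ H' : C((Fin n → I) × I, E), p.comp H' = H ∧ ∀ y, H' (y, 0) = h₀ y

/-- A space is aspherical if all of its homotopy groups in degrees `≥ 2` vanish. -/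
def Aspherical (X : Type u) [TopologicalSpace X] : Prop :=
  ∀ n : ℕ, 2 ≤ n → ∀ x : X, Subsingleton (HomotopyGroup.Pi n X x)

/-- A space admits a CW structure if it is homeomorphic to (the realization of)
a CW complex. -/
def HasCWStructure (X : Type u) [TopologicalSpace X] : Prop :=
  ∃ K : TopCat.{u}, Nonempty (TopCat.CWComplex K) ∧ Nonempty (X ≃ₜ K)

/-- The loop `γ` acts trivially on `πₙ(X, x₀)`: for every generalized `n`-loop `f` and
every homotopy `H` of `f` moving the boundary of the cube along `γ`, the end of the
homotopy is homotopic rel boundary to `f`.  (This is the standard action of `π₁` on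
`πₙ` by change of basepoint.) -/
def LoopActsTriviallyOnPi {X : Type u} [TopologicalSpace X] {x₀ : X}
    (γ : Path x₀ x₀) (n : ℕ) : Prop :=
  ∀ (f : GenLoop (Fin n) X x₀) (H : C((Fin n → I) × I, X))
    (_ : ∀ y, H (y, 0) = f.1 y)
    (hbd : ∀ (y : Fin n → I) (t : I), y ∈ Cube.boundary (Fin n) → H (y, t) = γ t),
    GenLoop.Homotopic f
      ⟨H.comp ⟨fun y => (y, (1 : I)), by fun_prop⟩, fun y hy => by
        show H (y, 1) = x₀
        rw [hbd y 1 hy, γ.target]⟩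

section GottliebAuxSection
open Set

namespace GottliebAux

variable {n : ℕ}

/-- sup over all coordinates (including the extra `I` factor) of `|2x-1|`. -/
def bnorm (z : (Fin n → I) × I) : ℝ :=
  Finset.univ.sup' Finset.univ_nonempty fun o : Option (Fin n) =>
    |2 * ((o.elim z.2 fun i => z.1 i : I) : ℝ) - 1|

lemma abs_two_mul_sub_one_le (x : I) : |2 * (x : ℝ) - 1| ≤ 1 := by
  have h1 := x.2.1; have h2 := x.2.2
  rw [abs_le]; constructor <;> nlinarith [h1, h2]

lemma bnorm_le_one (z : (Fin n → I) × I) : bnorm z ≤ 1 := by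
  refine Finset.sup'_le _ _ fun o _ => abs_two_mul_sub_one_le _

lemma le_bnorm (z : (Fin n → I) × I) (o : Option (Fin n)) :
    |2 * ((o.elim z.2 fun i => z.1 i : I) : ℝ) - 1| ≤ bnorm z :=
by
  exact Finset.le_sup' (fun o : Option (Fin n) => |2 * ((o.elim z.2 fun i => z.1 i : I) : ℝ) - 1|)
    (Finset.mem_univ o)

lemma bnorm_eq_one_of (z : (Fin n → I) × I) (o : Option (Fin n))
    (h : (o.elim z.2 fun i => z.1 i : I) = 0 ∨ (o.elim z.2 fun i => z.1 i : I) = 1) :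
    bnorm z = 1 := by
  have h1 : |2 * ((o.elim z.2 fun i => z.1 i : I) : ℝ) - 1| = 1 := by
    rcases h with h | h <;> rw [h] <;> norm_num
  exact le_antisymm (bnorm_le_one z) (h1 ▸ le_bnorm z o)

lemma bnorm_continuous : Continuous (bnorm (n := n)) := by
  refine Continuous.finset_sup'_apply Finset.univ_nonempty fun o _ => ?_
  cases o with
  | none =>
    exact (continuous_const.mul (continuous_subtype_val.comp continuous_snd)).sub
      continuous_const |>.abs
  | some i =>
    exact (continuous_const.mul (continuous_subtype_val.comp
      ((continuous_apply i).comp continuous_fst))).sub continuous_const |>.abs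

/-- Denominator in the retraction formula. -/
def Mden (p : ((Fin n → I) × I) × I) : ℝ := max (2 - (p.2 : ℝ)) (2 * bnorm p.1)

lemma one_le_Mden (p : ((Fin n → I) × I) × I) : 1 ≤ Mden p :=
  le_trans (by nlinarith [p.2.2.2]) (le_max_left _ _)

lemma Mden_ne_zero (p : ((Fin n → I) × I) × I) : Mden p ≠ 0 := by
  have := one_le_Mden p; positivity

lemma Mden_le_two (p : ((Fin n → I) × I) × I) : Mden p ≤ 2 := by
  refine max_le (by nlinarith [p.2.2.1]) (by nlinarith [bnorm_le_one p.1])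

lemma Mden_continuous : Continuous (Mden (n := n)) :=
  (continuous_const.sub (continuous_subtype_val.comp continuous_snd)).max
    (continuous_const.mul (bnorm_continuous.comp continuous_fst))

/-- clamp into `I` -/
def clamp (x : ℝ) : I := Set.projIcc 0 1 zero_le_one x

lemma clamp_continuous : Continuous clamp := continuous_projIcc (h := zero_le_one)

lemma clamp_coe (x : I) : clamp (x : ℝ) = x := Set.projIcc_val zero_le_one x

/-- The retraction of the cube `Iⁿ × I × I` onto (bottom `s = 0`) ∪ (sides). -/
def retr (p : ((Fin n → I) × I) × I) : ((Fin n → I) × I) × I :=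
  ((fun i => clamp (1 / 2 + (2 / Mden p) * ((p.1.1 i : ℝ) - 1 / 2)),
      clamp (1 / 2 + (2 / Mden p) * ((p.1.2 : ℝ) - 1 / 2))),
    clamp (2 - 2 * (2 - (p.2 : ℝ)) / Mden p))

lemma retr_continuous : Continuous (retr (n := n)) := by
  have hM : Continuous (Mden (n := n)) := Mden_continuous
  have hMne := Mden_ne_zero (n := n)
  refine Continuous.prodMk (Continuous.prodMk ?_ ?_) ?_
  · refine continuous_pi fun i => clamp_continuous.comp ?_
    exact continuous_const.add ((continuous_const.div hM hMne).mul
      ((continuous_subtype_val.comp ((continuous_apply i).comp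
        (continuous_fst.comp continuous_fst))).sub continuous_const))
  · exact clamp_continuous.comp (continuous_const.add ((continuous_const.div hM hMne).mul
      ((continuous_subtype_val.comp (continuous_snd.comp continuous_fst)).sub continuous_const)))
  · exact clamp_continuous.comp (continuous_const.sub ((continuous_const.mul
      (continuous_const.sub (continuous_subtype_val.comp continuous_snd))).div hM hMne))

lemma Mden_eq_two_of_bnorm (p : ((Fin n → I) × I) × I) (h : bnorm p.1 = 1) : Mden p = 2 := by
  have := p.2.2.1
  rw [Mden, h]; rw [max_eq_right] <;> nlinarith

lemma retr_id (p : ((Fin n → I) × I) × I) (h : Mden p = 2) : retr p = p := by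
  obtain ⟨⟨y, t⟩, s⟩ := p
  simp only [retr, h] at *
  refine Prod.ext (Prod.ext ?_ ?_) ?_
  · funext i
    have : (1 : ℝ) / 2 + 2 / 2 * ((y i : ℝ) - 1 / 2) = (y i : ℝ) := by ring
    simp only [this, clamp_coe]
  · have : (1 : ℝ) / 2 + 2 / 2 * ((t : ℝ) - 1 / 2) = (t : ℝ) := by ring
    simp only [this, clamp_coe]
  · have : (2 : ℝ) - 2 * (2 - (s : ℝ)) / 2 = (s : ℝ) := by ring
    simp only [this, clamp_coe]

end GottliebAux

namespace GottliebAux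

variable {n : ℕ}

lemma clamp_zero : clamp (0 : ℝ) = 0 := by
  apply Subtype.ext; rw [clamp, Set.coe_projIcc]; norm_num

lemma clamp_one : clamp (1 : ℝ) = 1 := by
  apply Subtype.ext; rw [clamp, Set.coe_projIcc]; norm_num

/-- The target of the retraction: bottom of the box union the sides. -/
def Tset (n : ℕ) : Set (((Fin n → I) × I) × I) :=
  {p | p.2 = 0} ∪ ({p | p.1.2 = 0} ∪ {p | p.1.2 = 1} ∪ {p | p.1.1 ∈ Cube.boundary (Fin n)})

lemma retr_mem (p : ((Fin n → I) × I) × I) : retr p ∈ Tset n := by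
  rcases le_total (2 * bnorm p.1) (2 - (p.2 : ℝ)) with h | h
  · left
    have hM : Mden p = 2 - (p.2 : ℝ) := max_eq_left h
    have hne : (2 : ℝ) - (p.2 : ℝ) ≠ 0 := by have := p.2.2.2; intro h0; nlinarith
    show (retr p).2 = 0
    have : (2 : ℝ) - 2 * (2 - (p.2 : ℝ)) / Mden p = 0 := by
      rw [hM]; field_simp; norm_num
    simp only [retr, this, clamp_zero]
  · right
    have hM : Mden p = 2 * bnorm p.1 := max_eq_right h
    have hc : (1 : ℝ) / 2 ≤ bnorm p.1 := by have := p.2.2.2; nlinarith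
    have hcne : bnorm p.1 ≠ 0 := by intro h0; rw [h0] at hc; norm_num at hc
    obtain ⟨o, -, ho⟩ := Finset.exists_mem_eq_sup' (Finset.univ_nonempty)
      (fun o : Option (Fin n) => |2 * ((o.elim p.1.2 fun i => p.1.1 i : I) : ℝ) - 1|)
    have ho' : |2 * ((o.elim p.1.2 fun i => p.1.1 i : I) : ℝ) - 1| = bnorm p.1 := ho.symm
    set w : ℝ := ((o.elim p.1.2 fun i => p.1.1 i : I) : ℝ) with hw
    set c : ℝ := bnorm p.1 with hcdef
    have key : (1 : ℝ) / 2 + (2 / Mden p) * (w - 1 / 2) = 0 ∨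
        (1 : ℝ) / 2 + (2 / Mden p) * (w - 1 / 2) = 1 := by
      rcases abs_cases (2 * w - 1) with ⟨he, -⟩ | ⟨he, -⟩
      · right
        have h2 : 2 * w - 1 = c := by rw [← he, ho']
        rw [hM]; field_simp; nlinarith [h2]
      · left
        have h2 : -(2 * w - 1) = c := by rw [← he, ho']
        rw [hM]; field_simp; nlinarith [h2]
    cases o with
    | none =>
      have : (retr p).1.2 = 0 ∨ (retr p).1.2 = 1 := by
        show clamp _ = 0 ∨ clamp _ = 1
        rcases key with k | k
        · left; rw [show ((p.1.2 : ℝ)) = w from rfl, k, clamp_zero]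
        · right; rw [show ((p.1.2 : ℝ)) = w from rfl, k, clamp_one]
      rcases this with h' | h'
      · exact Or.inl (Or.inl h')
      · exact Or.inl (Or.inr h')
    | some i =>
      refine Or.inr ⟨i, ?_⟩
      show (fun j => clamp _) i = 0 ∨ (fun j => clamp _) i = 1
      rcases key with k | k
      · left; show clamp _ = 0
        rw [show ((p.1.1 i : ℝ)) = w from rfl, k, clamp_zero]
      · right; show clamp _ = 1
        rw [show ((p.1.1 i : ℝ)) = w from rfl, k, clamp_one]

end GottliebAux

namespace GottliebAux

variable {n : ℕ}

lemma continuousOn_union_closed {α β : Type*} [TopologicalSpace α] [TopologicalSpace β]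
    {f : α → β} {s t : Set α} (hs : IsClosed s) (ht : IsClosed t)
    (h1 : ContinuousOn f s) (h2 : ContinuousOn f t) : ContinuousOn f (s ∪ t) := by
  intro x hx
  rw [ContinuousWithinAt, nhdsWithin_union, Filter.tendsto_sup]
  constructor
  · by_cases h : x ∈ s
    · exact h1 x h
    · exact continuousWithinAt_of_notMem_closure (by rwa [hs.closure_eq])
  · by_cases h : x ∈ t
    · exact h2 x h
    · exact continuousWithinAt_of_notMem_closure (by rwa [ht.closure_eq])

lemma isClosed_boundary : IsClosed (Cube.boundary (Fin n)) := by
  have : Cube.boundary (Fin n) = ⋃ i : Fin n, ({y | y i = 0} ∪ {y | y i = 1}) := by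
    ext y
    simp only [Cube.boundary, Set.mem_setOf_eq, Set.mem_iUnion, Set.mem_union]
  rw [this]
  exact isClosed_iUnion_of_finite fun i =>
    ((isClosed_singleton.preimage (continuous_apply i)).union
      (isClosed_singleton.preimage (continuous_apply i)))

/-- The piecewise filling map. -/
def fill {X : Type*} (A : (Fin n → I) × I → X) (φf φg : (Fin n → I) → X)
    (N : I × I → X) (p : ((Fin n → I) × I) × I) : X :=
  if p.2 = 0 then A p.1
  else if p.1.2 = 0 then φf p.1.1
  else if p.1.2 = 1 then φg p.1.1
  else N (p.2, p.1.2)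

lemma fill_continuousOn {X : Type*} [TopologicalSpace X] {x₀ : X}
    {A : (Fin n → I) × I → X} {φf φg : (Fin n → I) → X} {N : I × I → X}
    (hA : Continuous A) (hf : Continuous φf) (hg : Continuous φg) (hN : Continuous N)
    (hA0 : ∀ y, A (y, 0) = φf y) (hA1 : ∀ y, A (y, 1) = φg y)
    (hAbd : ∀ y t, y ∈ Cube.boundary (Fin n) → A (y, t) = N (0, t))
    (hfbd : ∀ y ∈ Cube.boundary (Fin n), φf y = x₀)
    (hgbd : ∀ y ∈ Cube.boundary (Fin n), φg y = x₀)
    (hN0 : ∀ s, N (s, 0) = x₀) (hN1 : ∀ s, N (s, 1) = x₀) :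
    ContinuousOn (fill A φf φg N) (Tset n) := by
  classical
  have hcA : IsClosed {p : ((Fin n → I) × I) × I | p.2 = 0} :=
    isClosed_singleton.preimage continuous_snd
  have hc0 : IsClosed {p : ((Fin n → I) × I) × I | p.1.2 = 0} :=
    isClosed_singleton.preimage (continuous_snd.comp continuous_fst)
  have hc1 : IsClosed {p : ((Fin n → I) × I) × I | p.1.2 = 1} :=
    isClosed_singleton.preimage (continuous_snd.comp continuous_fst)
  have hcb : IsClosed {p : ((Fin n → I) × I) × I | p.1.1 ∈ Cube.boundary (Fin n)} :=
    isClosed_boundary.preimage (continuous_fst.comp continuous_fst)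
  refine continuousOn_union_closed hcA ((hc0.union hc1).union hcb) ?_
    (continuousOn_union_closed (hc0.union hc1) hcb
      (continuousOn_union_closed hc0 hc1 ?_ ?_) ?_)
  · -- bottom: fill = A ∘ fst
    refine (hA.comp continuous_fst).continuousOn.congr fun p hp => ?_
    simp only [fill, Function.comp_apply]
    rw [if_pos (show p.2 = 0 from hp)]
  · -- t = 0 : fill = φf ∘ p.1.1
    refine (hf.comp (continuous_fst.comp continuous_fst)).continuousOn.congr fun p hp => ?_
    have hp : p.1.2 = 0 := hp
    simp only [fill, Function.comp_apply]
    by_cases h : p.2 = 0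
    · rw [if_pos h]
      have : p.1 = (p.1.1, (0:I)) := by rw [← hp]
      rw [this, hA0]
    · rw [if_neg h, if_pos hp]
  · -- t = 1
    refine (hg.comp (continuous_fst.comp continuous_fst)).continuousOn.congr fun p hp => ?_
    have hp : p.1.2 = 1 := hp
    have h10 : (1 : I) ≠ 0 := by
      intro h; have := congrArg Subtype.val h; norm_num at this
    simp only [fill, Function.comp_apply]
    by_cases h : p.2 = 0
    · rw [if_pos h]
      have : p.1 = (p.1.1, (1:I)) := by rw [← hp]
      rw [this, hA1]
    · rw [if_neg h, if_neg (hp ▸ h10), if_pos hp]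
  · -- boundary: fill = N (s, t)
    refine (hN.comp ((continuous_snd).prodMk (continuous_snd.comp continuous_fst))).continuousOn.congr
      fun p hp => ?_
    have hp : p.1.1 ∈ Cube.boundary (Fin n) := hp
    simp only [fill, Function.comp_apply]
    by_cases h : p.2 = 0
    · rw [if_pos h, h]
      exact hAbd _ _ hp
    · rw [if_neg h]
      by_cases h0 : p.1.2 = 0
      · rw [if_pos h0, hfbd _ hp, h0, hN0]
      · rw [if_neg h0]
        by_cases h1 : p.1.2 = 1
        · rw [if_pos h1, hgbd _ hp, h1, hN1]
        · rw [if_neg h1]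

end GottliebAux

namespace GottliebAux

lemma one_ne_zero_I : (1 : I) ≠ 0 := by
  intro h; have := congrArg Subtype.val h; norm_num at this

lemma genloop_homotopic_of_null {X : Type*} [TopologicalSpace X] {x₀ : X} {n : ℕ}
    (f g : GenLoop (Fin n) X x₀) (ε : Path x₀ x₀) (F : ε.Homotopy (Path.refl x₀))
    (H' : C((Fin n → I) × I, X))
    (h0 : ∀ y, H' (y, 0) = f.1 y) (h1 : ∀ y, H' (y, 1) = g.1 y)
    (hbd : ∀ y t, y ∈ Cube.boundary (Fin n) → H' (y, t) = ε t) :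
    GenLoop.Homotopic f g := by
  have hΦ : ContinuousOn
      (fill (fun z => H' z) (fun y => f.1 y) (fun y => g.1 y) (fun q => F q)) (Tset n) := by
    refine fill_continuousOn (x₀ := x₀) H'.continuous f.1.continuous g.1.continuous
      (map_continuous F) h0 h1 ?_ (fun y hy => f.2 y hy) (fun y hy => g.2 y hy)
      (fun s => F.source s) (fun s => F.target s)
    · intro y t hy
      rw [hbd y t hy]
      exact (F.apply_zero t).symm
  -- identity of the retraction on relevant points
  have hid : ∀ (y : Fin n → I) (u : I), bnorm (y, u) = 1 →
      retr ((y, u), 1) = ((y, u), 1) := fun y u h =>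
    retr_id _ (Mden_eq_two_of_bnorm _ h)
  have hval : ∀ (y : Fin n → I) (u : I), bnorm (y, u) = 1 →
      (fill (fun z => H' z) (fun y => f.1 y) (fun y => g.1 y) (fun q => F q))
        (retr ((y, u), 1)) =
      (if u = 0 then f.1 y else if u = 1 then g.1 y else F (1, u)) := by
    intro y u h
    rw [hid y u h]
    simp only [fill]
    rw [if_neg one_ne_zero_I]
  refine ⟨⟨⟨⟨fun q =>
      (fill (fun z => H' z) (fun y => f.1 y) (fun y => g.1 y) (fun q => F q))
        (retr ((q.2, q.1), 1)), ?_⟩, ?_, ?_⟩, ?_⟩⟩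
  · exact hΦ.comp_continuous
      (retr_continuous.comp ((continuous_snd.prodMk continuous_fst).prodMk continuous_const))
      fun q => retr_mem _
  · intro y
    have hb : bnorm (y, (0:I)) = 1 := bnorm_eq_one_of _ none (Or.inl rfl)
    show (fill _ _ _ _) (retr ((y, (0:I)), 1)) = f.1 y
    rw [hval y 0 hb, if_pos rfl]
  · intro y
    have hb : bnorm (y, (1:I)) = 1 := bnorm_eq_one_of _ none (Or.inr rfl)
    show (fill _ _ _ _) (retr ((y, (1:I)), 1)) = g.1 y
    rw [hval y 1 hb, if_neg one_ne_zero_I, if_pos rfl]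
  · intro u y hy
    obtain ⟨i, hi⟩ := hy
    have hb : bnorm (y, u) = 1 := bnorm_eq_one_of _ (some i) hi
    show (fill _ _ _ _) (retr ((y, u), 1)) = f.1 y
    rw [hval y u hb]
    by_cases h0' : u = 0
    · rw [if_pos h0']
    · rw [if_neg h0']
      by_cases h1' : u = 1
      · rw [if_pos h1', g.2 y ⟨i, hi⟩, f.2 y ⟨i, hi⟩]
      · rw [if_neg h1', f.2 y ⟨i, hi⟩]
        exact F.apply_one u |>.trans rfl

end GottliebAux


namespace GottliebAux

lemma homotopic_transfer {X : Type*} [TopologicalSpace X] {a a' : X} (h : a = a')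
    (p q : Path a a) (p' q' : Path a' a') (hp : (p : I → X) = (p' : I → X))
    (hq : (q : I → X) = (q' : I → X)) (H : p.Homotopic q) : p'.Homotopic q' := by
  subst h
  have hp' : p = p' := Path.ext hp
  have hq' : q = q' := Path.ext hq
  rwa [hp', hq'] at H

lemma smul_loop_homotopic {G X : Type*} [Group G] [TopologicalSpace G] [IsTopologicalGroup G]
    [TopologicalSpace X] [MulAction G X] [ContinuousSMul G X] {x₀ : X}
    (sgm : Path (1 : G) 1) (tau d e : Path x₀ x₀)
    (hd : ∀ t, d t = sgm t • x₀) (he : ∀ t, e t = sgm t • tau t) :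
    e.Homotopic (d.trans tau) := by
  let μ : C(G × X, X) := ⟨fun p => p.1 • p.2, continuous_smul⟩
  have hsgm : sgm.Homotopy (sgm.trans (Path.refl 1)) := (Path.Homotopy.transRefl sgm).symm
  have htau : tau.Homotopy ((Path.refl x₀).trans tau) := (Path.Homotopy.reflTrans tau).symm
  have h1 : (sgm.prod tau).Homotopy ((sgm.trans (Path.refl 1)).prod ((Path.refl x₀).trans tau)) :=
    Path.Homotopic.prodHomotopy hsgm htau
  have h2 : (sgm.prod tau).Homotopy ((sgm.prod (Path.refl x₀)).trans ((Path.refl 1).prod tau)) :=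
    h1.cast rfl (Path.trans_prod_eq_prod_trans sgm (Path.refl 1) (Path.refl x₀) tau).symm
  have h3 : ((sgm.prod tau).map μ.continuous).Homotopic
      (((sgm.prod (Path.refl x₀)).trans ((Path.refl 1).prod tau)).map μ.continuous) :=
    ⟨Path.Homotopy.map h2 μ⟩
  refine homotopic_transfer (one_smul G x₀) _ _ e (d.trans tau) ?_ ?_ h3
  · funext t
    rw [Path.map_coe]
    simp only [Function.comp_apply, Path.prod_coe, μ, ContinuousMap.coe_mk]
    exact (he t).symm
  · funext t
    rw [Path.map_coe]
    simp only [Function.comp_apply]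
    rw [show (((sgm.prod (Path.refl x₀)).trans ((Path.refl 1).prod tau))) t =
      ((sgm.prod (Path.refl x₀)).trans ((Path.refl 1).prod tau)) t from rfl]
    rw [Path.trans_apply, Path.trans_apply]
    split_ifs with h
    · simp only [Path.prod_coe, Path.refl_apply, μ, ContinuousMap.coe_mk]
      exact (hd _).symm
    · simp only [Path.prod_coe, Path.refl_apply, μ, ContinuousMap.coe_mk]
      exact one_smul G _

end GottliebAux

end GottliebAuxSection

/-- Let `X` be a path-connected topological space and let
`α ∈ π₁(X, x₀)` be a central element that lies in the image of
`ev⁎ : π₁(G, 1) → π₁(X, x₀)` for some path-connected (topological) group `G` acting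
continuously on `X` (with `ev g = g • x₀`).  Then `α` acts trivially on all homotopy
groups `πₙ(X, x₀)` (via any loop representing it). -/
theorem central_gottlieb_acts_trivially {G X : Type u} [Group G] [TopologicalSpace G]
    [IsTopologicalGroup G] [PathConnectedSpace G] [TopologicalSpace X]
    [PathConnectedSpace X] [MulAction G X] [ContinuousSMul G X] (x₀ : X)
    (ev : C(G, X)) (hev : ∀ g : G, ev g = g • x₀) (hb : ev 1 = x₀)
    (α : FundamentalGroup X x₀)
    (hcent : α ∈ Subgroup.center (FundamentalGroup X x₀))
    (hGott : ∃ a : FundamentalGroup G 1,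
      (hb ▸ pi1Map ev 1 a : FundamentalGroup X x₀) = α) :
    ∀ (n : ℕ) (γ : Path x₀ x₀),
      FundamentalGroup.fromPath (X := TopCat.of X) ⟦γ⟧ = α →
        LoopActsTriviallyOnPi γ n := by
  subst hb
  intro n γ hγ
  obtain ⟨a, ha⟩ := hGott
  have ha' : pi1Map ev 1 a = α := ha
  obtain ⟨β, hβ⟩ := Quotient.exists_rep
    (show Path.Homotopic.Quotient (1 : G) 1 from a.toPath)
  -- the image loop
  set δ : Path (ev 1) (ev 1) := β.map ev.continuous with hδ
  have hom_eq : (⟦δ⟧ : Path.Homotopic.Quotient (ev 1) (ev 1)) = ⟦γ⟧ := by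
    have h1 : (pi1Map ev 1 a).toPath =
        (πₘ (TopCat.ofHom ev)).map a.toPath := rfl
    have h2 : α.toPath = (⟦γ⟧ : Path.Homotopic.Quotient (ev 1) (ev 1)) := by rw [← hγ]
    have hβ' : (⟦β⟧ : Path.Homotopic.Quotient (1 : G) 1) = a.toPath := hβ
    have e1 : (⟦δ⟧ : Path.Homotopic.Quotient (ev 1) (ev 1)) = (pi1Map ev 1 a).toPath := by
      rw [h1, ← hβ']
      exact Path.Homotopic.Quotient.mk_map β ev
    rw [e1, ha']
    exact h2
  have hδγ : δ.Homotopic γ := Quotient.exact hom_eq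
  -- auxiliary loops
  set β' : Path (1 : G) 1 :=
    ⟨⟨fun t => (β t)⁻¹, β.continuous.inv⟩, by simp, by simp⟩ with hβ'
  set η : Path (ev 1) (ev 1) :=
    ⟨⟨fun t => (β t)⁻¹ • (ev 1), (β.continuous.inv).smul continuous_const⟩,
      by simp, by simp⟩ with hη
  set ε : Path (ev 1) (ev 1) :=
    ⟨⟨fun t => (β t)⁻¹ • γ t, (β.continuous.inv).smul γ.continuous⟩,
      by simp, by simp⟩ with hε
  have L1 : ε.Homotopic (η.trans γ) :=
    GottliebAux.smul_loop_homotopic β' γ η ε (fun t => rfl) (fun t => rfl)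
  have L2 : (Path.refl (ev 1)).Homotopic (η.trans δ) := by
    refine GottliebAux.smul_loop_homotopic β' δ η (Path.refl (ev 1)) (fun t => rfl) fun t => ?_
    show ev 1 = (β t)⁻¹ • δ t
    have : δ t = β t • (ev 1) := by
      simp only [hδ, Path.map_coe, Function.comp_apply]
      exact hev (β t)
    rw [this, inv_smul_smul]
  have hcomp : (η.trans δ).Homotopic (η.trans γ) :=
    Path.Homotopic.hcomp (Path.Homotopic.refl η) hδγ
  have hnull : ε.Homotopic (Path.refl (ev 1)) := L1.trans (hcomp.symm.trans L2.symm)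
  obtain ⟨F⟩ := hnull
  intro f H hH0 hbd
  refine GottliebAux.genloop_homotopic_of_null f _ ε F
    ⟨fun z => (β z.2)⁻¹ • H z,
      ((β.continuous.comp continuous_snd).inv).smul H.continuous⟩ ?_ ?_ ?_
  · intro y
    show (β 0)⁻¹ • H (y, 0) = f.1 y
    rw [hH0 y]; simp
  · intro y
    show (β 1)⁻¹ • H (y, 1) = H (y, 1)
    simp
  · intro y t hy
    show (β t)⁻¹ • H (y, t) = ε t
    rw [hbd y t hy]; rfl


end
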